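/- Let r ≥ 1 and let m_1, …, m_r and n_1, …, n_r be positive integers. Let H_r be the abelian group obtained as the quotient of the free abelian group ℤ^r on generators e_1, …, e_r by the subgroup generated by the elements m_1 e_1, the elements n_i e_i − m_{i+1} e_{i+1} for i = 1, …, r−1, and n_r e_r (this is the abelianization of the group ⟨x_1, …, x_r : x_1^{m_1} = 1, x_i^{n_i} = x_{i+1}^{m_{i+1}}, x_r^{n_r} = 1⟩). If H_r is the trivial group, then gcd(m_i, n_j) = 1 for all indices with 1 ≤ i ≤ j ≤ r. -/

import Mathlib

/-- The relation vectors `m_1 e_1`, `n_i e_i − m_{i+1} e_{i+1}`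
(`i = 1, …, r−1`) and `n_r e_r` in the free abelian group `ℤ^r`, where
`r = r' + 1`. -/
def relVectors (r' : ℕ) (m n : Fin (r' + 1) → ℕ) :
    Set (Fin (r' + 1) → ℤ) :=
  {Pi.single (0 : Fin (r' + 1)) (m 0 : ℤ)} ∪
    Set.range (fun i : Fin r' =>
      Pi.single i.castSucc (n i.castSucc : ℤ) - Pi.single i.succ (m i.succ : ℤ)) ∪
    {Pi.single (Fin.last r') (n (Fin.last r') : ℤ)}

open Fin.NatCast in
/-- If the abelian group `H_r = ℤ^r / ⟨m_1 e_1, n_i e_i − m_{i+1} e_{i+1},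
n_r e_r⟩` is trivial, then `gcd(m_i, n_j) = 1` for all `1 ≤ i ≤ j ≤ r`. -/
theorem abelian_quotient_trivial_imp_gcd (r' : ℕ)
    (m n : Fin (r' + 1) → ℕ)
    (hm : ∀ i, 0 < m i) (hn : ∀ j, 0 < n j)
    (htriv : ∀ x : (Fin (r' + 1) → ℤ) ⧸ AddSubgroup.closure (relVectors r' m n),
      x = 0) :
    ∀ i j : Fin (r' + 1), i ≤ j → Nat.gcd (m i) (n j) = 1 := by
  intro i j hij
  by_contra hgcd
  obtain ⟨p, hp, hpd⟩ := Nat.exists_prime_and_dvd hgcd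
  have hpm : p ∣ m i := hpd.trans (Nat.gcd_dvd_left _ _)
  have hpn : p ∣ n j := hpd.trans (Nat.gcd_dvd_right _ _)
  -- greatest index I ≤ j.val with p ∣ m I
  classical
  obtain ⟨I, hIj, hPI, hImax⟩ :
      ∃ I, I ≤ j.val ∧ p ∣ m (I : Fin (r' + 1)) ∧
        ∀ k, I < k → k ≤ j.val → ¬ p ∣ m (k : Fin (r' + 1)) := by
    refine ⟨Nat.findGreatest (fun k => p ∣ m (k : Fin (r' + 1))) j.val,
      Nat.findGreatest_le _, ?_, fun k h1 h2 => Nat.findGreatest_is_greatest (P := fun k => p ∣ m (k : Fin (r' + 1))) h1 h2⟩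
    have hPi : p ∣ m ((i.val : ℕ) : Fin (r' + 1)) := by
      simpa [Fin.cast_val_eq_self] using hpm
    exact Nat.findGreatest_spec (P := fun k => p ∣ m (k : Fin (r' + 1))) hij hPi
  have hIlt : I < r' + 1 := lt_of_le_of_lt hIj j.isLt
  set J : ℕ := j.val with hJ
  -- the coefficient vector
  set c : Fin (r' + 1) → ZMod p := fun k =>
    if I ≤ k.val ∧ k.val ≤ J then
      (((∏ l ∈ Finset.Ico I k.val, n (l : Fin (r' + 1))) *
        (∏ l ∈ Finset.Ico (k.val + 1) (J + 1), m (l : Fin (r' + 1))) : ℕ) : ZMod p)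
    else 0 with hc
  -- the homomorphism
  set φ : (Fin (r' + 1) → ℤ) →+ ZMod p :=
    { toFun := fun x => ∑ k, (x k : ZMod p) * c k
      map_zero' := by simp
      map_add' := by intro x y; simp [add_mul, Finset.sum_add_distrib] } with hφ
  have hsingle : ∀ (a : Fin (r' + 1)) (v : ℤ), φ (Pi.single a v) = (v : ZMod p) * c a := by
    intro a v
    simp only [hφ, AddMonoidHom.coe_mk, ZeroHom.coe_mk, Pi.single_apply]
    rw [Finset.sum_eq_single a]
    · simp
    · intro b _ hb; simp [hb]
    · simp
  haveI : Fact p.Prime := ⟨hp⟩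
  -- φ vanishes on the relation vectors
  have hker : relVectors r' m n ⊆ (φ.ker : Set (Fin (r' + 1) → ℤ)) := by
    rintro x (⟨hx | ⟨k, rfl⟩⟩ | hx)
    · -- first relation
      rw [Set.mem_singleton_iff] at hx
      subst hx
      simp only [SetLike.mem_coe, AddMonoidHom.mem_ker, hsingle]
      rcases Nat.eq_zero_or_pos I with h0 | h0
      · have : p ∣ m 0 := by
          have := hPI; rw [h0] at this; simpa using this
        have : ((m 0 : ℕ) : ZMod p) = 0 := (ZMod.natCast_eq_zero_iff _ _).mpr this
        push_cast
        rw [this, zero_mul]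
      · have : c 0 = 0 := by
          simp only [hc, Fin.val_zero]
          apply if_neg; rintro ⟨h1, -⟩; omega
        rw [this, mul_zero]
    · -- middle relations
      simp only [SetLike.mem_coe, AddMonoidHom.mem_ker, map_sub, hsingle]
      set A : ℕ := k.val with hA
      have hcs : (k.castSucc : Fin (r' + 1)).val = A := rfl
      have hss : (k.succ : Fin (r' + 1)).val = A + 1 := rfl
      rcases lt_or_ge A I with hAI | hAI
      · have hca : c k.castSucc = 0 := by
          simp only [hc]; rw [if_neg]; rintro ⟨h1, -⟩; omega
        rcases Nat.lt_or_ge (A + 1) I with h2 | h2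
        · have hcb : c k.succ = 0 := by
            simp only [hc]; rw [if_neg]; rintro ⟨h1, -⟩; omega
          rw [hca, hcb]; ring
        · have hAI1 : A + 1 = I := by omega
          have : p ∣ m k.succ := by
            have := hPI
            rw [← hAI1] at this
            rw [← hss, Fin.cast_val_eq_self] at this
            exact this
          have hmz : ((m k.succ : ℕ) : ZMod p) = 0 :=
            (ZMod.natCast_eq_zero_iff _ _).mpr this
          push_cast
          rw [hca, hmz]; ring
      · rcases Nat.lt_or_ge J A with hJA | hJA
        · have hca : c k.castSucc = 0 := by
            simp only [hc]; rw [if_neg]; rintro ⟨-, h2⟩; omega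
          have hcb : c k.succ = 0 := by
            simp only [hc]; rw [if_neg]; rintro ⟨-, h2⟩; omega
          rw [hca, hcb]; ring
        · rcases eq_or_lt_of_le hJA with hAJ | hAJ
          · -- A = J
            have hkj : k.castSucc = j := by
              apply Fin.ext; rw [hcs]; exact hAJ
            have hnz : ((n k.castSucc : ℕ) : ZMod p) = 0 := by
              rw [hkj]; exact (ZMod.natCast_eq_zero_iff _ _).mpr hpn
            have hcb : c k.succ = 0 := by
              simp only [hc]; rw [if_neg]; rintro ⟨-, h2⟩; omega
            push_cast
            rw [hnz, hcb]; ring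
          · -- I ≤ A, A < J : the generic case
            have hca : c k.castSucc =
                (((∏ l ∈ Finset.Ico I A, n (l : Fin (r' + 1))) *
                  (∏ l ∈ Finset.Ico (A + 1) (J + 1), m (l : Fin (r' + 1))) : ℕ) : ZMod p) := by
              simp only [hc]; rw [if_pos ⟨hAI, by omega⟩]; rfl
            have hcb : c k.succ =
                (((∏ l ∈ Finset.Ico I (A + 1), n (l : Fin (r' + 1))) *
                  (∏ l ∈ Finset.Ico (A + 2) (J + 1), m (l : Fin (r' + 1))) : ℕ) : ZMod p) := by
              simp only [hc]; rw [if_pos ⟨by omega, by omega⟩]; rfl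
            have key : (n k.castSucc) *
                ((∏ l ∈ Finset.Ico I A, n (l : Fin (r' + 1))) *
                  (∏ l ∈ Finset.Ico (A + 1) (J + 1), m (l : Fin (r' + 1)))) =
                (m k.succ) *
                ((∏ l ∈ Finset.Ico I (A + 1), n (l : Fin (r' + 1))) *
                  (∏ l ∈ Finset.Ico (A + 2) (J + 1), m (l : Fin (r' + 1)))) := by
              have e1 : ∏ l ∈ Finset.Ico I (A + 1), n (l : Fin (r' + 1)) =
                  (∏ l ∈ Finset.Ico I A, n (l : Fin (r' + 1))) * n k.castSucc := by
                rw [Finset.prod_Ico_succ_top hAI]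
                congr 1
                rw [← hcs, Fin.cast_val_eq_self]
              have e2 : ∏ l ∈ Finset.Ico (A + 1) (J + 1), m (l : Fin (r' + 1)) =
                  m k.succ * ∏ l ∈ Finset.Ico (A + 2) (J + 1), m (l : Fin (r' + 1)) := by
                rw [Finset.prod_eq_prod_Ico_succ_bot (by omega)]
                congr 1
                rw [← hss, Fin.cast_val_eq_self]
              rw [e1, e2]; ring
            rw [hca, hcb]
            rw [sub_eq_zero]
            exact_mod_cast congrArg (fun t : ℕ => (t : ZMod p)) key
    · -- last relation
      rw [Set.mem_singleton_iff] at hx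
      subst hx
      simp only [SetLike.mem_coe, AddMonoidHom.mem_ker, hsingle]
      rcases eq_or_lt_of_le (Fin.le_last j) with hjl | hjl
      · have : ((n (Fin.last r') : ℕ) : ZMod p) = 0 := by
          rw [← hjl]; exact (ZMod.natCast_eq_zero_iff _ _).mpr hpn
        push_cast
        rw [this, zero_mul]
      · have : c (Fin.last r') = 0 := by
          simp only [hc]; rw [if_neg]; rintro ⟨-, h2⟩
          simp only [Fin.val_last] at h2
          have := j.isLt
          omega
        rw [this, mul_zero]
  -- conclude
  have hmem : Pi.single ((I : Fin (r' + 1))) (1 : ℤ) ∈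
      AddSubgroup.closure (relVectors r' m n) := by
    rw [← QuotientAddGroup.eq_zero_iff]
    exact htriv _
  have hclos : AddSubgroup.closure (relVectors r' m n) ≤ φ.ker :=
    (AddSubgroup.closure_le _).mpr hker
  have hzero : φ (Pi.single ((I : Fin (r' + 1))) (1 : ℤ)) = 0 := hclos hmem
  rw [hsingle] at hzero
  have hIval : ((I : Fin (r' + 1)) : ℕ) = I := Fin.val_cast_of_lt hIlt
  have hcI : c (I : Fin (r' + 1)) =
      ((∏ l ∈ Finset.Ico (I + 1) (J + 1), m (l : Fin (r' + 1)) : ℕ) : ZMod p) := by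
    simp only [hc]
    rw [hIval] -- may fail; use simp
    rw [if_pos ⟨le_refl _, hIj⟩]
    simp
  rw [hcI] at hzero
  simp only [Int.cast_one, one_mul] at hzero
  rw [ZMod.natCast_eq_zero_iff] at hzero
  obtain ⟨l, hl, hpl⟩ := (Nat.Prime.prime hp).exists_mem_finset_dvd hzero
  rw [Finset.mem_Ico] at hl
  exact hImax l (by omega) (by omega) hpl
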